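/- Let g be a real symmetric 4×4 matrix such that there exists an invertible real 4×4 matrix P with Pᵀ g P = diag(−1, 1, 1, 1) (Lorentzian signature (−+++)). Suppose the upper-left 2×2 block satisfies g₀₀ g₁₁ − g₀₁² < 0. Then g is invertible and the 2×2 submatrix of g⁻¹ formed by rows and columns with indices in {2, 3} is positive definite. -/

import Mathlib

open Matrix

/-- In Minkowski space `diag(-1,1,1,1)`, a nonzero vector orthogonal to a
timelike vector is spacelike. -/
lemma mink_aux (a b : Fin 4 → ℝ)
    (ha : -(a 0)^2 + (a 1)^2 + (a 2)^2 + (a 3)^2 < 0)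
    (hab : -(a 0 * b 0) + a 1 * b 1 + a 2 * b 2 + a 3 * b 3 = 0)
    (hb : b ≠ 0) :
    0 < -(b 0)^2 + (b 1)^2 + (b 2)^2 + (b 3)^2 := by
  have ha0 : 0 < (a 0)^2 := by nlinarith [sq_nonneg (a 1), sq_nonneg (a 2), sq_nonneg (a 3)]
  have heq : a 0 * b 0 = a 1 * b 1 + a 2 * b 2 + a 3 * b 3 := by linarith
  have hsq : (a 0 * b 0)^2 = (a 1 * b 1 + a 2 * b 2 + a 3 * b 3)^2 := by rw [heq]
  rcases lt_or_eq_of_le (by positivity : (0:ℝ) ≤ (b 1)^2 + (b 2)^2 + (b 3)^2) with h | h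
  · nlinarith [sq_nonneg (a 1 * b 2 - a 2 * b 1), sq_nonneg (a 1 * b 3 - a 3 * b 1),
      sq_nonneg (a 2 * b 3 - a 3 * b 2),
      mul_pos (by linarith : (0:ℝ) < (a 0)^2 - ((a 1)^2 + (a 2)^2 + (a 3)^2)) h,
      hsq, ha0]
  · exfalso
    have h1 : b 1 = 0 := by nlinarith [sq_nonneg (b 1), sq_nonneg (b 2), sq_nonneg (b 3)]
    have h2 : b 2 = 0 := by nlinarith [sq_nonneg (b 1), sq_nonneg (b 2), sq_nonneg (b 3)]
    have h3 : b 3 = 0 := by nlinarith [sq_nonneg (b 1), sq_nonneg (b 2), sq_nonneg (b 3)]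
    have h0 : b 0 = 0 := by
      have hz : a 0 * b 0 = 0 := by rw [h1, h2, h3] at heq; linarith [heq]
      rcases mul_eq_zero.mp hz with h | h
      · exact absurd (by rw [h]; ring : (a 0)^2 = 0) (by positivity)
      · exact h
    exact hb (funext fun i => by fin_cases i <;> assumption)

/-- For a Lorentzian metric of signature `(−+++)` whose `t`-`φ` block satisfies
`g₀₀ g₁₁ − g₀₁² < 0`, the metric is invertible and the `{2,3}`-block of the
inverse metric is positive definite. -/
theorem stmt7 (g : Matrix (Fin 4) (Fin 4) ℝ) (hsymm : g.IsSymm)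
    (hsig : ∃ P : Matrix (Fin 4) (Fin 4) ℝ, IsUnit P.det ∧
      Pᵀ * g * P = Matrix.diagonal ![-1, 1, 1, 1])
    (hblock : g 0 0 * g 1 1 - (g 0 1) ^ 2 < 0) :
    IsUnit g.det ∧
      ((g⁻¹).submatrix (![2, 3] : Fin 2 → Fin 4) (![2, 3] : Fin 2 → Fin 4)).PosDef := by
  obtain ⟨P, hP, hη⟩ := hsig
  have hPne : P.det ≠ 0 := hP.ne_zero
  -- determinant of the diagonal matrix
  have hdetη : (Matrix.diagonal ![-1, 1, 1, 1] : Matrix (Fin 4) (Fin 4) ℝ).det = -1 := by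
    simp [Matrix.det_diagonal, Fin.prod_univ_four]
  have hdetg : P.det * g.det * P.det = -1 := by
    have := congrArg Matrix.det hη
    rw [Matrix.det_mul, Matrix.det_mul, Matrix.det_transpose, hdetη] at this
    linarith [this]
  have hgdet : g.det ≠ 0 := by
    intro h
    rw [h] at hdetg
    norm_num at hdetg
  have hgdetU : IsUnit g.det := isUnit_iff_ne_zero.mpr hgdet
  refine ⟨hgdetU, ?_⟩
  -- the change of basis identity
  have key : ∀ x z : Fin 4 → ℝ,
      (P *ᵥ x) ⬝ᵥ (g *ᵥ (P *ᵥ z)) = x ⬝ᵥ ((Pᵀ * g * P) *ᵥ z) := by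
    intro x z
    rw [Matrix.mulVec_mulVec, Matrix.dotProduct_mulVec, Matrix.dotProduct_mulVec,
      ← Matrix.vecMul_transpose, Matrix.vecMul_vecMul, Matrix.mul_assoc]
  have quad : ∀ x z : Fin 4 → ℝ,
      x ⬝ᵥ ((Matrix.diagonal ![-1, 1, 1, 1] : Matrix (Fin 4) (Fin 4) ℝ) *ᵥ z)
        = -(x 0 * z 0) + x 1 * z 1 + x 2 * z 2 + x 3 * z 3 := by
    intro x z
    simp [Matrix.mulVec, dotProduct, Fin.sum_univ_four, Matrix.diagonal]
  have h10 : g 1 0 = g 0 1 := hsymm.apply 0 1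
  -- existence of a timelike vector in span(e0,e1)
  obtain ⟨u0, u1, hu⟩ : ∃ u0 u1 : ℝ,
      g 0 0 * u0^2 + 2 * g 0 1 * u0 * u1 + g 1 1 * u1^2 < 0 := by
    rcases lt_trichotomy (g 0 0) 0 with hlt | heq0 | hgt
    · exact ⟨1, 0, by nlinarith⟩
    · have hg01 : g 0 1 ≠ 0 := by
        intro h; rw [heq0, h] at hblock; norm_num at hblock
      refine ⟨-(g 1 1 + 1) / (2 * g 0 1), 1, ?_⟩
      have : 2 * g 0 1 * (-(g 1 1 + 1) / (2 * g 0 1)) = -(g 1 1 + 1) := by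
        field_simp
      rw [heq0]
      nlinarith [this]
    · exact ⟨g 0 1, -(g 0 0), by nlinarith [mul_pos hgt (show (0:ℝ) < (g 0 1)^2 - g 0 0 * g 1 1 by linarith)]⟩
  -- the core positivity statement
  have core : ∀ w : Fin 4 → ℝ, w ≠ 0 → (g *ᵥ w) 0 = 0 → (g *ᵥ w) 1 = 0 →
      0 < w ⬝ᵥ (g *ᵥ w) := by
    intro w hw hw0 hw1
    set u : Fin 4 → ℝ := ![u0, u1, 0, 0] with hudef
    have huq : u ⬝ᵥ (g *ᵥ u) < 0 := by
      simp only [Matrix.mulVec, dotProduct, Fin.sum_univ_four, hudef]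
      simp only [Matrix.cons_val_zero, Matrix.cons_val_one, Matrix.head_cons,
        Matrix.cons_val_two, Matrix.tail_cons, Matrix.cons_val_three]
      rw [h10]
      nlinarith [hu]
    have cross : u ⬝ᵥ (g *ᵥ w) = 0 := by
      simp only [dotProduct, Fin.sum_univ_four, hudef]
      simp only [Matrix.cons_val_zero, Matrix.cons_val_one, Matrix.head_cons,
        Matrix.cons_val_two, Matrix.tail_cons, Matrix.cons_val_three]
      rw [hw0, hw1]
      ring
    set a : Fin 4 → ℝ := P⁻¹ *ᵥ u with hadef
    set b : Fin 4 → ℝ := P⁻¹ *ᵥ w with hbdef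
    have hPinv : P * P⁻¹ = 1 := Matrix.mul_nonsing_inv P hP
    have hPa : P *ᵥ a = u := by
      rw [hadef, Matrix.mulVec_mulVec, hPinv, Matrix.one_mulVec]
    have hPb : P *ᵥ b = w := by
      rw [hbdef, Matrix.mulVec_mulVec, hPinv, Matrix.one_mulVec]
    have ha' : -(a 0)^2 + (a 1)^2 + (a 2)^2 + (a 3)^2 < 0 := by
      have := key a a
      rw [hPa, hη, quad] at this
      nlinarith [huq, this]
    have hab' : -(a 0 * b 0) + a 1 * b 1 + a 2 * b 2 + a 3 * b 3 = 0 := by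
      have := key a b
      rw [hPa, hPb, hη, quad] at this
      linarith [cross, this]
    have hbne : b ≠ 0 := by
      intro h
      apply hw
      rw [← hPb, h, Matrix.mulVec_zero]
    have := mink_aux a b ha' hab' hbne
    have hq := key b b
    rw [hPb, hη, quad] at hq
    nlinarith [this, hq]
  -- the inverse is symmetric
  have hinvsymm : (g⁻¹).IsSymm := by
    unfold Matrix.IsSymm
    rw [Matrix.transpose_nonsing_inv, hsymm]
  refine Matrix.posDef_iff_dotProduct_mulVec.mpr ?_
  constructor
  · -- Hermitian
    rw [Matrix.IsHermitian]
    ext i j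
    simp only [Matrix.conjTranspose_apply, Matrix.submatrix_apply, RCLike.star_def,
      starRingEnd_apply, star_trivial]
    exact hinvsymm.apply _ _
  · -- positivity
    intro y hy
    set v : Fin 4 → ℝ := ![0, 0, y 0, y 1] with hvdef
    set w : Fin 4 → ℝ := g⁻¹ *ᵥ v with hwdef
    have hgw : g *ᵥ w = v := by
      rw [hwdef, Matrix.mulVec_mulVec, Matrix.mul_nonsing_inv g hgdetU, Matrix.one_mulVec]
    have hwne : w ≠ 0 := by
      intro h
      apply hy
      have hv : v = 0 := by rw [← hgw, h, Matrix.mulVec_zero]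
      have h0 : y 0 = 0 := by
        have := congrFun hv 2
        simpa [hvdef] using this
      have h1 : y 1 = 0 := by
        have := congrFun hv 3
        simpa [hvdef] using this
      funext i
      fin_cases i <;> assumption
    have hpos : 0 < w ⬝ᵥ (g *ᵥ w) := by
      apply core w hwne
      · rw [hgw]; simp [hvdef]
      · rw [hgw]; simp [hvdef]
    have heq2 : star y ⬝ᵥ ((g⁻¹).submatrix (![2, 3] : Fin 2 → Fin 4) ![2, 3] *ᵥ y)
        = w ⬝ᵥ (g *ᵥ w) := by
      rw [hgw]
      have : v ⬝ᵥ w = w ⬝ᵥ v := dotProduct_comm v w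
      rw [← this, hwdef]
      simp only [star_trivial]
      simp [Matrix.mulVec, dotProduct, Fin.sum_univ_four, Fin.sum_univ_two,
        Matrix.submatrix_apply, hvdef]
    rw [heq2]
    exact hpos
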